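/- Let g : ℝ → ℝ satisfy g(0) = 0, g'(t) = (1 + 2 g(t)^2)^(-1/2) for t ≥ 0, extended oddly. Then |g(t) g'(t)| < 1/√2 for all t ∈ ℝ. -/

import Mathlib

theorem stmt_7 (g : ℝ → ℝ) (hg0 : g 0 = 0)
    (hgd : ∀ t : ℝ, 0 ≤ t → HasDerivAt g (1 / Real.sqrt (1 + 2 * g t ^ 2)) t)
    (hodd : ∀ t : ℝ, g (-t) = - g t) :
    ∀ t : ℝ, |g t * deriv g t| < 1 / Real.sqrt 2 := by
  have hall : ∀ t : ℝ, HasDerivAt g (1 / Real.sqrt (1 + 2 * g t ^ 2)) t := by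
    intro t
    rcases le_or_gt 0 t with ht | ht
    · exact hgd t ht
    · have h1 : HasDerivAt g (1 / Real.sqrt (1 + 2 * g (-t) ^ 2)) (-t) :=
        hgd (-t) (by linarith)
      have h2 : HasDerivAt (fun s => -g (-s)) (1 / Real.sqrt (1 + 2 * g (-t) ^ 2)) t := by
        have := (h1.comp t (hasDerivAt_neg t)).neg
        simp at this; rw [one_div]; exact this
      have hfun : (fun s => -g (-s)) = g := by
        funext s; rw [hodd]; ring
      have hsq : g (-t) ^ 2 = g t ^ 2 := by rw [hodd]; ring
      rw [hfun, hsq] at h2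
      exact h2
  intro t
  rw [(hall t).deriv]
  set a := g t
  have hpos : 0 < Real.sqrt (1 + 2 * a ^ 2) := Real.sqrt_pos.2 (by positivity)
  have h2pos : 0 < Real.sqrt 2 := Real.sqrt_pos.2 (by norm_num)
  rw [abs_mul, abs_of_pos (by positivity : (0:ℝ) < 1 / Real.sqrt (1 + 2 * a ^ 2)),
    mul_one_div, div_lt_div_iff₀ hpos h2pos, one_mul]
  calc |a| * Real.sqrt 2 = Real.sqrt (a ^ 2) * Real.sqrt 2 := by
        rw [Real.sqrt_sq_eq_abs]
    _ = Real.sqrt (a ^ 2 * 2) := by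
        rw [Real.sqrt_mul (by positivity)]
    _ < Real.sqrt (1 + 2 * a ^ 2) := by
        apply Real.sqrt_lt_sqrt (by positivity)
        nlinarith
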